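/- arXiv:0810.1639 — 8 statements merged into one kernel-verified Lean document; each statement's English description precedes it below -/
import Mathlib

section
/- In the greedy partition of a sequence into increasing lists, every element placed by the greedy algorithm into list L_k with k ≥ 2 is smaller than some earlier element placed into list L_{k-1}; consequently, if the greedy algorithm creates u lists, then the sequence has a strictly decreasing subsequence of length u. -/
/-- One step of the greedy patience algorithm: append `x` to the first list whose
last element is smaller than `x`, or start a new list. Lists are kept in order of
creation and each list stores its elements in arrival order. -/
def greedyStep (x : ℕ) : List (List ℕ) → List (List ℕ)
  | [] => [[x]]
  | L :: rest => if L.getLastI < x then (L ++ [x]) :: rest else L :: greedyStep x rest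

/-- Greedy partition of a sequence into increasing lists `L₁, L₂, …`. -/
def greedy (A : List ℕ) : List (List ℕ) := A.foldl (fun s x => greedyStep x s) []

/-- `LDS(A)`: length of the longest strictly decreasing subsequence of `A`. -/
noncomputable def ldsL (A : List ℕ) : ℕ :=
  sSup {m | ∃ l : List ℕ, l.Sublist A ∧ l.Pairwise (· > ·) ∧ l.length = m}

/-- `A` can be partitioned (via a coloring of positions) into `k` strictly
increasing subsequences. -/
def SUSleL (A : List ℕ) (k : ℕ) : Prop :=
  ∃ c : ℕ → ℕ, (∀ i < A.length, c i < k) ∧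
    ∀ i j, i < j → j < A.length → c i = c j → A.getD i 0 < A.getD j 0

/-- `SUS(A)`: minimum number of increasing subsequences partitioning `A`. -/
noncomputable def susL (A : List ℕ) : ℕ := sInf {k | SUSleL A k}

/-- Least positive integer not occurring in `P` (the ACK value after receiving `P`). -/
noncomputable def ackL (P : List ℕ) : ℕ := sInf {k | 0 < k ∧ k ∉ P}

/-- Maximum of a list of naturals (0 for the empty list). -/
def maxL (P : List ℕ) : ℕ := P.foldr max 0

/-- Buffer size after receiving the packets `P`: `max P - (ackL P - 1)`. -/
noncomputable def bufL (P : List ℕ) : ℤ := (maxL P : ℤ) - ackL P + 1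


open List in
lemma greedyStep_length_le (x : ℕ) (s : List (List ℕ)) :
    s.length ≤ (greedyStep x s).length := by
  induction s with
  | nil => simp [greedyStep]
  | cons L rest ih =>
    simp only [greedyStep]
    split <;> simp <;> omega

open List in
lemma greedyStep_spec (x : ℕ) (s : List (List ℕ)) (k : ℕ) (L' : List ℕ)
    (h : (greedyStep x s)[k]? = some L') :
    (s[k]? = some L') ∨
    (∃ L, s[k]? = some L ∧ L' = L ++ [x] ∧
      ∀ i < k, ∃ M, s[i]? = some M ∧ ¬ M.getLastI < x) ∨
    (L' = [x] ∧ k = s.length ∧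
      ∀ i < k, ∃ M, s[i]? = some M ∧ ¬ M.getLastI < x) := by
  induction s generalizing k with
  | nil =>
    simp only [greedyStep] at h
    match k with
    | 0 => right; right; simp_all
    | k+1 => simp at h
  | cons L rest ih =>
    simp only [greedyStep] at h
    split at h
    · match k with
      | 0 =>
        right; left
        exact ⟨L, by simp, by simpa using h.symm, by omega⟩
      | k+1 =>
        left; simpa using h
    · match k with
      | 0 => left; simpa using h
      | k+1 =>
        simp only [getElem?_cons_succ] at h ⊢
        rcases ih k h with h1 | ⟨M, hM, hL', hall⟩ | ⟨hL', hk, hall⟩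
        · exact Or.inl h1
        · refine Or.inr (Or.inl ⟨M, hM, hL', ?_⟩)
          intro i hi
          match i with
          | 0 => exact ⟨L, by simp, by assumption⟩
          | i+1 => simpa using hall i (by omega)
        · refine Or.inr (Or.inr ⟨hL', by simp [hk], ?_⟩)
          intro i hi
          match i with
          | 0 => exact ⟨L, by simp, by assumption⟩
          | i+1 => simpa using hall i (by omega)

structure GInv (A : List ℕ) (s : List (List ℕ)) : Prop where
  ne : ∀ L ∈ s, L ≠ []
  mem : ∀ L ∈ s, ∀ a ∈ L, a ∈ A
  link : ∀ k (L₁ L₀ : List ℕ), s[k+1]? = some L₁ → s[k]? = some L₀ →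
    ∀ x ∈ L₁, ∃ y ∈ L₀, A.idxOf y < A.idxOf x ∧ x < y

open List in
lemma GInv.step {A : List ℕ} {s : List (List ℕ)} {x : ℕ}
    (h : GInv A s) (hx : x ∉ A) : GInv (A ++ [x]) (greedyStep x s) := by
  have hmemof : ∀ (k : ℕ) (L : List ℕ), s[k]? = some L → L ∈ s := by
    intro k L hk
    exact mem_iff_getElem?.2 ⟨k, hk⟩
  have keyidx : ∀ y ∈ A, (A ++ [x]).idxOf y = A.idxOf y := fun y hy =>
    idxOf_append_of_mem hy
  have hxidx : (A ++ [x]).idxOf x = A.length := by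
    rw [idxOf_append_of_notMem hx]; simp
  -- a convenient "old list survives" fact
  have survive : ∀ (k : ℕ) (L₀ M : List ℕ), (greedyStep x s)[k]? = some L₀ →
      s[k]? = some M → ∀ y ∈ M, y ∈ L₀ := by
    intro k L₀ M hk hM y hy
    rcases greedyStep_spec x s k L₀ hk with h1 | ⟨L, hL, hL', _⟩ | ⟨_, hk', _⟩
    · rw [h1] at hM; cases hM; exact hy
    · rw [hL] at hM; cases hM; simp [hL', hy]
    · exfalso
      have hnone : s[k]? = none := getElem?_eq_none (by omega)
      rw [hnone] at hM; cases hM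
  constructor
  · intro L hL
    obtain ⟨k, hk⟩ := mem_iff_getElem?.1 hL
    rcases greedyStep_spec x s k L hk with h1 | ⟨M, hM, hL', _⟩ | ⟨hL', _, _⟩
    · exact h.ne L (hmemof k L h1)
    · simp [hL']
    · simp [hL']
  · intro L hL a ha
    obtain ⟨k, hk⟩ := mem_iff_getElem?.1 hL
    rcases greedyStep_spec x s k L hk with h1 | ⟨M, hM, hL', _⟩ | ⟨hL', _, _⟩
    · exact mem_append_left _ (h.mem L (hmemof k L h1) a ha)
    · subst hL'
      rcases mem_append.1 ha with ha | ha
      · exact mem_append_left _ (h.mem M (hmemof k M hM) a ha)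
      · simp at ha; simp [ha]
    · subst hL'; simp at ha; simp [ha]
  · intro k L₁ L₀ h1 h0 x' hx'
    -- helper for the "x' = x" case
    have newcase : (∀ i < k + 1, ∃ M, s[i]? = some M ∧ ¬ M.getLastI < x) →
        ∃ y ∈ L₀, (A ++ [x]).idxOf y < (A ++ [x]).idxOf x ∧ x < y := by
      intro hall
      obtain ⟨M, hM, hlt⟩ := hall k (by omega)
      have hMs : M ∈ s := hmemof k M hM
      have hMne : M ≠ [] := h.ne M hMs
      have hlast : M.getLastI = M.getLast hMne := by
        rw [getLastI_eq_getLast?, getLast?_eq_getLast hMne, Option.getD_some]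
      set y := M.getLast hMne with hy
      have hyM : y ∈ M := getLast_mem hMne
      have hyA : y ∈ A := h.mem M hMs y hyM
      have hyL₀ : y ∈ L₀ := survive k L₀ M h0 hM y hyM
      have hxy : x < y := by
        have : ¬ y < x := by rwa [hlast] at hlt
        rcases lt_or_eq_of_le (not_lt.1 this) with h' | h'
        · exact h'
        · exact absurd (h' ▸ hyA) hx
      refine ⟨y, hyL₀, ?_, hxy⟩
      rw [keyidx y hyA, hxidx]
      exact idxOf_lt_length_of_mem hyA
    rcases greedyStep_spec x s (k+1) L₁ h1 with g1 | ⟨M, hM, hL', hall⟩ | ⟨hL', _, hall⟩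
    · -- unchanged list: use old link
      have hk : k < s.length := by
        by_contra h'
        rw [getElem?_eq_none (by omega)] at g1; cases g1
      obtain ⟨M₀, hM₀⟩ : ∃ M₀, s[k]? = some M₀ := ⟨s[k], getElem?_eq_getElem hk⟩
      obtain ⟨y, hyM₀, hidx, hlt⟩ := h.link k L₁ M₀ g1 hM₀ x' hx'
      have hyA : y ∈ A := h.mem M₀ (hmemof k M₀ hM₀) y hyM₀
      have hx'A : x' ∈ A := h.mem L₁ (hmemof (k+1) L₁ g1) x' hx'
      exact ⟨y, survive k L₀ M₀ h0 hM₀ y hyM₀, by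
        simpa [keyidx y hyA, keyidx x' hx'A] using hidx, hlt⟩
    · subst hL'
      rcases mem_append.1 hx' with hx' | hx'
      · -- old element of M
        have hk : k < s.length := by
          by_contra h'
          rw [getElem?_eq_none (by omega)] at hM; cases hM
        obtain ⟨M₀, hM₀⟩ : ∃ M₀, s[k]? = some M₀ := ⟨s[k], getElem?_eq_getElem hk⟩
        obtain ⟨y, hyM₀, hidx, hlt⟩ := h.link k M M₀ hM hM₀ x' hx'
        have hyA : y ∈ A := h.mem M₀ (hmemof k M₀ hM₀) y hyM₀
        have hx'A : x' ∈ A := h.mem M (hmemof (k+1) M hM) x' hx'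
        exact ⟨y, survive k L₀ M₀ h0 hM₀ y hyM₀, by
          simpa [keyidx y hyA, keyidx x' hx'A] using hidx, hlt⟩
      · simp at hx'; subst hx'
        exact newcase hall
    · subst hL'
      simp at hx'; subst hx'
      exact newcase hall

open List in
lemma sublist_of_idxOf_pairwise : ∀ (A l : List ℕ), (∀ a ∈ l, a ∈ A) →
    l.Pairwise (fun a b => A.idxOf a < A.idxOf b) → l.Sublist A := by
  intro A
  induction A with
  | nil =>
    intro l hmem _
    match l with
    | [] => exact Sublist.refl _
    | a :: t => exact absurd (hmem a (by simp)) (by simp)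
  | cons c A' ih =>
    intro l hmem hpw
    match l with
    | [] => exact nil_sublist _
    | a :: t =>
      by_cases hac : a = c
      · subst hac
        refine Sublist.cons₂ a (ih t ?_ ?_)
        · intro b hb
          have hbm : b ∈ a :: A' := hmem b (mem_cons_of_mem a hb)
          have hba : b ≠ a := by
            intro hba
            have := (pairwise_cons.1 hpw).1 b hb
            rw [hba] at this
            omega
          rcases mem_cons.1 hbm with h' | h'
          · exact absurd h' hba
          · exact h'
        · have ht := (pairwise_cons.1 hpw).2
          refine ht.imp_of_mem ?_
          intro b d hb hd hbd
          have hbA : b ∈ A' := by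
            have hbm := hmem b (mem_cons_of_mem a hb)
            have hba : b ≠ a := by
              intro hba
              have := (pairwise_cons.1 hpw).1 b hb
              rw [hba] at this; omega
            rcases mem_cons.1 hbm with h' | h'
            · exact absurd h' hba
            · exact h'
          have hba : b ≠ a := by
            intro h'; subst h'
            have := (pairwise_cons.1 hpw).1 b hb
            omega
          have hda : d ≠ a := by
            intro h'; subst h'
            have h1 := (pairwise_cons.1 hpw).1 d hd
            omega
          rwa [idxOf_cons_ne _ (Ne.symm hba), idxOf_cons_ne _ (Ne.symm hda),
            Nat.succ_lt_succ_iff] at hbd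
      · -- a ≠ c : everything lives in A'
        have hne : ∀ b ∈ a :: t, b ≠ c := by
          intro b hb
          rcases mem_cons.1 hb with h' | h'
          · subst h'; exact hac
          · intro hbc; subst hbc
            have h1 := pairwise_cons.1 hpw
            have h2 := h1.1 b h'
            rw [idxOf_cons_self] at h2
            omega
        refine Sublist.cons c (ih (a :: t) ?_ ?_)
        · intro b hb
          rcases mem_cons.1 (hmem b hb) with h' | h'
          · exact absurd h' (hne b hb)
          · exact h'
        · refine hpw.imp_of_mem ?_
          intro b d hb hd hbd
          rwa [idxOf_cons_ne _ (Ne.symm (hne b hb)),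
            idxOf_cons_ne _ (Ne.symm (hne d hd)), Nat.succ_lt_succ_iff] at hbd

open List in
lemma GInv.chain {A : List ℕ} {s : List (List ℕ)} (h : GInv A s) :
    ∀ (k : ℕ) (L : List ℕ), s[k]? = some L → ∀ x ∈ L,
    ∃ l : List ℕ, l.getLast? = some x ∧ l.length = k + 1 ∧
      (∀ a ∈ l, a ∈ A) ∧ (∀ a ∈ l, A.idxOf a ≤ A.idxOf x ∧ x ≤ a) ∧
      l.Pairwise (fun a b => A.idxOf a < A.idxOf b ∧ b < a) := by
  intro k
  induction k with
  | zero =>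
    intro L hL x hx
    refine ⟨[x], by simp, by simp, ?_, by simp, by simp⟩
    intro a ha
    rw [mem_singleton] at ha
    exact ha ▸ h.mem L (mem_iff_getElem?.2 ⟨0, hL⟩) x hx
  | succ k ih =>
    intro L hL x hx
    have hk : k < s.length := by
      by_contra h'
      rw [getElem?_eq_none (by omega)] at hL; cases hL
    obtain ⟨M, hM⟩ : ∃ M, s[k]? = some M := ⟨s[k], getElem?_eq_getElem hk⟩
    obtain ⟨y, hyM, hidx, hlt⟩ := h.link k L M hL hM x hx
    obtain ⟨l', hlast, hlen, hmemA, hbnd, hpw⟩ := ih M hM y hyM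
    have hxA : x ∈ A := h.mem L (mem_iff_getElem?.2 ⟨k+1, hL⟩) x hx
    refine ⟨l' ++ [x], getLast?_concat, by simp [hlen], ?_, ?_, ?_⟩
    · intro a ha
      rcases mem_append.1 ha with ha | ha
      · exact hmemA a ha
      · rw [mem_singleton] at ha; exact ha ▸ hxA
    · intro a ha
      rcases mem_append.1 ha with ha | ha
      · obtain ⟨h1, h2⟩ := hbnd a ha
        exact ⟨le_of_lt (lt_of_le_of_lt h1 hidx), le_of_lt (lt_of_lt_of_le hlt h2)⟩
      · rw [mem_singleton] at ha; exact ha ▸ ⟨le_refl _, le_refl _⟩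
    · rw [pairwise_append]
      refine ⟨hpw, by simp, ?_⟩
      intro a ha b hb
      rw [mem_singleton] at hb; subst hb
      obtain ⟨h1, h2⟩ := hbnd a ha
      exact ⟨lt_of_le_of_lt h1 hidx, lt_of_lt_of_le hlt h2⟩

open List in
lemma ginv_greedy : ∀ (A : List ℕ), A.Nodup → GInv A (greedy A) := by
  intro A
  induction A using List.reverseRecOn with
  | nil =>
    intro _
    exact ⟨by simp [greedy], by simp [greedy], by simp [greedy]⟩
  | append_singleton A' x ih =>
    intro hnd
    have hA' : A'.Nodup := hnd.sublist (sublist_append_left _ _)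
    have hx : x ∉ A' := fun hxm =>
      (List.nodup_append.1 hnd).2.2 x hxm x (by simp) rfl
    have : greedy (A' ++ [x]) = greedyStep x (greedy A') := by
      simp [greedy, foldl_append]
    rw [this]
    exact (ih hA').step hx
/-- every element placed by the greedy algorithm into list `L_{k+1}`
is smaller than some element of `L_k` that occurs earlier in `A`; consequently
there is a strictly decreasing subsequence of `A` of length equal to the number
of lists created. -/
theorem greedy_link_and_decreasing (A : List ℕ) (hA : A.Nodup) :
    (∀ k, (hk : k + 1 < (greedy A).length) →
      ∀ x ∈ (greedy A)[k + 1]'hk, ∃ y ∈ (greedy A)[k]'(by omega),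
        A.idxOf y < A.idxOf x ∧ x < y) ∧
    ∃ l : List ℕ, l.Sublist A ∧ l.Pairwise (· > ·) ∧ l.length = (greedy A).length := by
  have h := ginv_greedy A hA
  constructor
  · intro k hk x hx
    exact h.link k _ _ (List.getElem?_eq_getElem hk)
      (List.getElem?_eq_getElem (by omega)) x hx
  · rcases eq_or_ne (greedy A) [] with hnil | hne
    · exact ⟨[], List.nil_sublist _, List.Pairwise.nil, by simp [hnil]⟩
    · set s := greedy A with hs
      have hlen : 0 < s.length := List.length_pos_iff.2 hne
      have hks : s.length - 1 < s.length := by omega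
      set L := s[s.length - 1] with hLdef
      have hLmem : L ∈ s := List.getElem_mem _
      have hLne : L ≠ [] := h.ne L hLmem
      obtain ⟨x, hx⟩ := List.exists_mem_of_ne_nil L hLne
      obtain ⟨l, hlast, hlen', hmemA, hbnd, hpw⟩ :=
        h.chain (s.length - 1) L (List.getElem?_eq_getElem hks) x hx
      refine ⟨l, ?_, ?_, by omega⟩
      · exact sublist_of_idxOf_pairwise A l hmemA (hpw.imp fun h' => h'.1)
      · exact hpw.imp fun h' => h'.2
end

section
/- In the greedy partition of a sequence into increasing lists, each list is strictly increasing, and hence any strictly decreasing subsequence of the input contains at most one element from each list; consequently the number of lists created is at least LDS(A). -/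
lemma getLastI_cons_cons (b c : ℕ) (t : List ℕ) :
    (b :: c :: t).getLastI = (c :: t).getLastI := by
  simp [List.getLastI_eq_getLast?]

lemma le_getLastI_of_mem : ∀ (L : List ℕ), L.Pairwise (· < ·) → ∀ a ∈ L, a ≤ L.getLastI := by
  intro L
  induction L with
  | nil => simp
  | cons b t ih =>
    intro hs a ha
    cases t with
    | nil => simp at ha; simp [ha, List.getLastI]
    | cons c t' =>
      rw [getLastI_cons_cons]
      obtain ⟨hb, hs'⟩ := List.pairwise_cons.mp hs
      rcases List.mem_cons.mp ha with rfl | ha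
      · exact le_trans (le_of_lt (hb c (by simp))) (ih hs' c (by simp))
      · exact ih hs' a ha

/-- Invariant preservation for one greedy step. -/
lemma greedyStep_inv (x : ℕ) (P : List ℕ) :
    ∀ s : List (List ℕ), (∀ L ∈ s, L ≠ [] ∧ L.Pairwise (· < ·) ∧ L.Sublist P) →
      ∀ L ∈ greedyStep x s, L ≠ [] ∧ L.Pairwise (· < ·) ∧ L.Sublist (P ++ [x]) := by
  intro s
  induction s with
  | nil =>
    intro _ L hL
    simp [greedyStep] at hL
    subst hL
    exact ⟨by simp, by simp, List.sublist_append_right P [x]⟩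
  | cons M rest ih =>
    intro hinv L hL
    obtain ⟨hMne, hMs, hMsub⟩ := hinv M (by simp)
    simp only [greedyStep] at hL
    by_cases hc : M.getLastI < x
    · rw [if_pos hc] at hL
      rcases List.mem_cons.mp hL with rfl | hL
      · refine ⟨by simp, ?_, hMsub.append (by simp)⟩
        rw [List.pairwise_append]
        exact ⟨hMs, by simp, fun a ha b hb => by
          simp at hb; subst hb
          exact lt_of_le_of_lt (le_getLastI_of_mem M hMs a ha) hc⟩
      · obtain ⟨h1, h2, h3⟩ := hinv L (by simp [hL])
        exact ⟨h1, h2, h3.trans (List.sublist_append_left P [x])⟩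
    · rw [if_neg hc] at hL
      rcases List.mem_cons.mp hL with rfl | hL
      · exact ⟨hMne, hMs, hMsub.trans (List.sublist_append_left P [x])⟩
      · exact ih (fun L' hL' => hinv L' (by simp [hL'])) L hL

lemma greedyStep_mem (x : ℕ) :
    ∀ s : List (List ℕ), ∀ a, ((∃ L ∈ s, a ∈ L) ∨ a = x) → ∃ L ∈ greedyStep x s, a ∈ L := by
  intro s
  induction s with
  | nil =>
    rintro a (⟨L, hL, _⟩ | h)
    · simp at hL
    · exact ⟨[x], by simp [greedyStep], by simp [h]⟩
  | cons M rest ih =>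
    rintro a ha
    simp only [greedyStep]
    by_cases hc : M.getLastI < x
    · rw [if_pos hc]
      rcases ha with ⟨L, hL, haL⟩ | h
      · rcases List.mem_cons.mp hL with rfl | hL
        · exact ⟨L ++ [x], by simp, by simp [haL]⟩
        · exact ⟨L, by simp [hL], haL⟩
      · exact ⟨M ++ [x], by simp, by simp [h]⟩
    · rw [if_neg hc]
      rcases ha with ⟨L, hL, haL⟩ | h
      · rcases List.mem_cons.mp hL with rfl | hL
        · exact ⟨L, by simp, haL⟩
        · obtain ⟨L', hL', haL'⟩ := ih a (Or.inl ⟨L, hL, haL⟩)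
          exact ⟨L', by simp [hL'], haL'⟩
      · obtain ⟨L', hL', haL'⟩ := ih a (Or.inr h)
        exact ⟨L', by simp [hL'], haL'⟩

lemma greedy_inv :
    ∀ (A P : List ℕ) (s : List (List ℕ)),
      (∀ L ∈ s, L ≠ [] ∧ L.Pairwise (· < ·) ∧ L.Sublist P) →
      (∀ a ∈ P, ∃ L ∈ s, a ∈ L) →
      (∀ L ∈ A.foldl (fun s x => greedyStep x s) s, L ≠ [] ∧ L.Pairwise (· < ·) ∧ L.Sublist (P ++ A)) ∧
      (∀ a ∈ P ++ A, ∃ L ∈ A.foldl (fun s x => greedyStep x s) s, a ∈ L) := by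
  intro A
  induction A with
  | nil => intro P s h1 h2; simpa using ⟨h1, h2⟩
  | cons x t ih =>
    intro P s h1 h2
    have h1' := greedyStep_inv x P s h1
    have h2' : ∀ a ∈ P ++ [x], ∃ L ∈ greedyStep x s, a ∈ L := by
      intro a ha
      rcases List.mem_append.mp ha with ha | ha
      · exact greedyStep_mem x s a (Or.inl (h2 a ha))
      · exact greedyStep_mem x s a (Or.inr (by simpa using ha))
    have := ih (P ++ [x]) (greedyStep x s) h1' h2'
    simpa using this

lemma greedy_inv' (A : List ℕ) :
    (∀ L ∈ greedy A, L ≠ [] ∧ L.Pairwise (· < ·) ∧ L.Sublist A) ∧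
    (∀ a ∈ A, ∃ L ∈ greedy A, a ∈ L) := by
  have := greedy_inv A [] [] (by simp) (by simp)
  simpa [greedy] using this

/-- Two elements in both a decreasing and an increasing sublist of a nodup list coincide. -/
lemma cross (A l L : List ℕ) (hA : A.Nodup) (hl : l.Sublist A) (hL : L.Sublist A)
    (hls : l.Pairwise (· > ·)) (hLs : L.Pairwise (· < ·)) :
    ∀ x ∈ l, ∀ y ∈ l, x ∈ L → y ∈ L → x = y := by
  intro x hxl y hyl hxL hyL
  by_contra hxy
  set R : ℕ → ℕ → Prop := fun a b => A.idxOf a < A.idxOf b with hR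
  have hAR : A.Pairwise R := by
    rw [List.pairwise_iff_getElem]
    intro i j hi hj hij
    simp only [hR, List.Nodup.idxOf_getElem hA, hij]
  have hlR : l.Pairwise (fun a b => a > b ∧ R a b) := hls.and (hAR.sublist hl)
  have hLR : L.Pairwise (fun a b => a < b ∧ R a b) := hLs.and (hAR.sublist hL)
  have hS : ∀ a b, a ∈ l → b ∈ l → a ≠ b → (a > b ∧ R a b) ∨ (b > a ∧ R b a) := by
    intro a b ha hb hab
    haveI : Std.Symm (fun a b => (a > b ∧ R a b) ∨ (b > a ∧ R b a)) := ⟨fun _ _ h => Or.symm h⟩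
    exact List.Pairwise.forall (R := fun a b => (a > b ∧ R a b) ∨ (b > a ∧ R b a)) (hlR.imp (fun h => Or.inl h)) ha hb hab
  have hT : ∀ a b, a ∈ L → b ∈ L → a ≠ b → (a < b ∧ R a b) ∨ (b < a ∧ R b a) := by
    intro a b ha hb hab
    haveI : Std.Symm (fun a b => (a < b ∧ R a b) ∨ (b < a ∧ R b a)) := ⟨fun _ _ h => Or.symm h⟩
    exact List.Pairwise.forall (R := fun a b => (a < b ∧ R a b) ∨ (b < a ∧ R b a)) (hLR.imp (fun h => Or.inl h)) ha hb hab
  have h1 := hS x y hxl hyl hxy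
  have h2 := hT x y hxL hyL hxy
  simp only [hR] at h1 h2
  omega

lemma count_le :
    ∀ (s : List (List ℕ)) (l : List ℕ), l.Nodup →
      (∀ a ∈ l, ∃ L ∈ s, a ∈ L) →
      (∀ L ∈ s, (l.filter (fun x => x ∈ L)).length ≤ 1) →
      l.length ≤ s.length := by
  intro s
  induction s with
  | nil =>
    intro l _ hcov _
    cases l with
    | nil => simp
    | cons a t => obtain ⟨L, hL, _⟩ := hcov a (by simp); simp at hL
  | cons L rest ih =>
    intro l hnd hcov hfil
    have hsplit := l.length_eq_length_filter_add (fun x => x ∈ L)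
    have h1 : (l.filter (fun x => x ∈ L)).length ≤ 1 := hfil L (by simp)
    have h2 : (l.filter (fun x => !(decide (x ∈ L)))).length ≤ rest.length := by
      apply ih
      · exact hnd.filter _
      · intro a ha
        have hal : a ∈ l := List.mem_of_mem_filter ha
        have hnL : a ∉ L := by
          have := List.of_mem_filter ha
          simpa using this
        obtain ⟨L', hL', haL'⟩ := hcov a hal
        rcases List.mem_cons.mp hL' with rfl | hL'
        · exact absurd haL' hnL
        · exact ⟨L', hL', haL'⟩
      · intro L' hL'
        calc ((l.filter (fun x => !(decide (x ∈ L)))).filter (fun x => x ∈ L')).length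
            ≤ (l.filter (fun x => x ∈ L')).length :=
              ((l.filter_sublist (p := fun x => !(decide (x ∈ L)))).filter _).length_le
          _ ≤ 1 := hfil L' (by simp [hL'])
    simp only [List.length_cons]
    omega


/-- each greedy list is strictly increasing, any strictly decreasing
subsequence meets each list in at most one element, and hence the number of lists
created is at least `LDS(A)`. -/
theorem greedy_lists_increasing (A : List ℕ) (hA : A.Nodup) :
    (∀ L ∈ greedy A, L.Pairwise (· < ·)) ∧
    (∀ l : List ℕ, l.Sublist A → l.Pairwise (· > ·) →
      ∀ L ∈ greedy A, (l.filter (fun x => x ∈ L)).length ≤ 1) ∧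
    ldsL A ≤ (greedy A).length := by
  obtain ⟨hinv, hcov⟩ := greedy_inv' A
  have part2 : ∀ l : List ℕ, l.Sublist A → l.Pairwise (· > ·) →
      ∀ L ∈ greedy A, (l.filter (fun x => x ∈ L)).length ≤ 1 := by
    intro l hl hls L hLmem
    obtain ⟨_, hLs, hLsub⟩ := hinv L hLmem
    by_contra h
    push_neg at h
    have h2 : 2 ≤ (l.filter (fun x => x ∈ L)).length := h
    set f := l.filter (fun x => x ∈ L) with hf
    match hfe : f, h2 with
    | a :: b :: t, _ =>
      have hfnd : f.Nodup := (hls.nodup).filter _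
      rw [hfe] at hfnd
      have hab : a ≠ b := by
        have := hfnd
        simp at this
        exact fun h => this.1.1 (h ▸ rfl) |>.elim
      have ha : a ∈ f := by rw [hfe]; simp
      have hb : b ∈ f := by rw [hfe]; simp
      have hal : a ∈ l := List.mem_of_mem_filter ha
      have hbl : b ∈ l := List.mem_of_mem_filter hb
      have haL : a ∈ L := by simpa using List.of_mem_filter ha
      have hbL : b ∈ L := by simpa using List.of_mem_filter hb
      exact hab (cross A l L hA hl hLsub hls hLs a hal b hbl haL hbL)
  refine ⟨fun L hL => (hinv L hL).2.1, part2, ?_⟩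
  unfold ldsL
  have hne : {m | ∃ l : List ℕ, l.Sublist A ∧ l.Pairwise (· > ·) ∧ l.length = m}.Nonempty :=
    ⟨0, [], List.nil_sublist A, List.Pairwise.nil, rfl⟩
  apply csSup_le hne
  rintro m ⟨l, hl, hls, rfl⟩
  apply count_le (greedy A) l hls.nodup
  · intro a ha
    exact hcov a (hl.subset ha)
  · exact fun L hL => part2 l hl hls L hL
end

section
/- At every stage i of the greedy increasing-list partition of a permutation, for every j ≥ 1, the last element so far added to list L_j is the maximum among all elements currently in lists L_k with k ≥ j. In particular, the last element of L_1 is the maximum element seen so far. -/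
def GInv_s4 (s : List (List ℕ)) : Prop :=
  ∀ j k, (hj : j < s.length) → (hk : k < s.length) → j ≤ k →
    ∀ x ∈ s[k]'hk, x ≤ (s[j]'hj).getLastI

lemma getLastI_concat (l : List ℕ) (x : ℕ) : (l ++ [x]).getLastI = x := by
  simp [List.getLastI_eq_getLast?]

lemma mem_flatten_greedyStep {y x : ℕ} {s : List (List ℕ)}
    (h : y ∈ (greedyStep x s).flatten) : y = x ∨ y ∈ s.flatten := by
  induction s with
  | nil => simp [greedyStep] at h; exact Or.inl h
  | cons L rest ih =>
    simp only [greedyStep] at h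
    split at h
    · simp only [List.flatten_cons, List.mem_append, List.mem_singleton] at h ⊢
      rcases h with (h | h) | h
      · exact Or.inr (Or.inl h)
      · exact Or.inl h
      · exact Or.inr (Or.inr h)
    · simp only [List.flatten_cons, List.mem_append] at h ⊢
      rcases h with h | h
      · exact Or.inr (Or.inl h)
      · rcases ih h with h | h
        · exact Or.inl h
        · exact Or.inr (Or.inr h)

lemma self_mem_flatten_greedyStep (x : ℕ) (s : List (List ℕ)) :
    x ∈ (greedyStep x s).flatten := by
  induction s with
  | nil => simp [greedyStep]
  | cons L rest ih =>
    simp only [greedyStep]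
    split <;> simp [ih]

lemma mem_flatten_greedyStep_of_mem {y : ℕ} (x : ℕ) {s : List (List ℕ)}
    (h : y ∈ s.flatten) : y ∈ (greedyStep x s).flatten := by
  induction s with
  | nil => simp at h
  | cons L rest ih =>
    simp only [List.flatten_cons, List.mem_append] at h
    simp only [greedyStep]
    split <;> simp only [List.flatten_cons, List.mem_append]
    · rcases h with h | h
      · exact Or.inl (Or.inl h)
      · exact Or.inr h
    · rcases h with h | h
      · exact Or.inl h
      · exact Or.inr (ih h)

lemma ginv_greedyStep {s : List (List ℕ)} (x : ℕ) (h : GInv_s4 s) :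
    GInv_s4 (greedyStep x s) := by
  induction s with
  | nil =>
    intro j k hj hk hjk y hy
    simp [greedyStep] at hj hk
    subst hj; subst hk
    simp [greedyStep, List.getLastI] at hy ⊢
    omega
  | cons L rest ih =>
    have hrest : GInv_s4 rest := by
      intro j k hj hk hjk y hy
      exact h (j+1) (k+1) (by simpa using Nat.succ_lt_succ hj)
        (by simpa using Nat.succ_lt_succ hk) (by omega) y hy
    intro j k hj hk hjk y hy
    simp only [greedyStep] at hj hk hy ⊢
    by_cases hlt : L.getLastI < x
    · simp only [if_pos hlt] at hj hk hy ⊢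
      match j, k with
      | 0, 0 =>
        simp only [List.getElem_cons_zero] at hy ⊢
        rw [getLastI_concat]
        rcases List.mem_append.mp hy with h1 | h1
        · have := h 0 0 (by simp) (by simp) le_rfl y h1
          simp only [List.getElem_cons_zero] at this
          omega
        · simp at h1; omega
      | 0, k + 1 =>
        simp only [List.getElem_cons_succ, List.getElem_cons_zero] at hy ⊢
        have := h 0 (k+1) (by simp) (by simpa using hk) (by omega) y (by simpa using hy)
        simp only [List.getElem_cons_zero, List.getElem_cons_succ] at this
        rw [getLastI_concat]
        omega
      | j + 1, k + 1 =>
        simp only [List.getElem_cons_succ] at hy ⊢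
        exact h (j+1) (k+1) (by simpa using hj) (by simpa using hk) (by omega) y (by simpa using hy)
    · simp only [if_neg hlt] at hj hk hy ⊢
      match j, k with
      | 0, 0 =>
        simp only [List.getElem_cons_zero] at hy ⊢
        exact h 0 0 (by simp) (by simp) le_rfl y hy
      | 0, k + 1 =>
        simp only [List.getElem_cons_succ, List.getElem_cons_zero] at hy ⊢
        have hyj : y ∈ (greedyStep x rest).flatten :=
          List.mem_flatten.mpr ⟨_, List.getElem_mem _, hy⟩
        rcases mem_flatten_greedyStep hyj with rfl | hyr
        · omega
        · rcases List.mem_flatten.mp hyr with ⟨l, hl, hyl⟩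
          rcases List.mem_iff_getElem.mp hl with ⟨m, hm, rfl⟩
          have := h 0 (m+1) (by simp) (by simpa using Nat.succ_lt_succ hm) (by omega) y
            (by simpa using hyl)
          simpa using this
      | j + 1, k + 1 =>
        simp only [List.getElem_cons_succ] at hy ⊢
        exact ih hrest j k (by simpa using hj) (by simpa using hk) (by omega) y hy

lemma ginv_greedy_s4 (l : List ℕ) : GInv_s4 (greedy l) ∧ ∀ y ∈ l, y ∈ (greedy l).flatten := by
  induction l using List.reverseRecOn with
  | nil =>
    constructor
    · intro j k hj hk; simp [greedy] at hj
    · simp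
  | append_singleton b a ih =>
    have hg : greedy (b ++ [a]) = greedyStep a (greedy b) := by
      simp [greedy, List.foldl_append]
    constructor
    · rw [hg]; exact ginv_greedyStep a ih.1
    · intro y hy
      rw [hg]
      rcases List.mem_append.mp hy with h | h
      · exact mem_flatten_greedyStep_of_mem a (ih.2 y h)
      · simp only [List.mem_singleton] at h; subst h
        exact self_mem_flatten_greedyStep _ _

/-- at every stage `i` of the greedy partition of a permutation,
the last element of `L_j` is the maximum of all elements in lists `L_k`, `k ≥ j`;
in particular the last element of `L_1` is the maximum element seen so far. -/
theorem greedy_last_is_max (n : ℕ) (A : List ℕ) (hA : A.Perm (List.range' 1 n))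
    (i : ℕ) (hi : i ≤ A.length) :
    (∀ j k, (hj : j < (greedy (A.take i)).length) →
      (hk : k < (greedy (A.take i)).length) → j ≤ k →
      ∀ x ∈ (greedy (A.take i))[k]'hk, x ≤ ((greedy (A.take i))[j]'hj).getLastI) ∧
    ∀ (h0 : 0 < (greedy (A.take i)).length),
      ∀ x ∈ A.take i, x ≤ ((greedy (A.take i))[0]'h0).getLastI := by
  obtain ⟨h1, h2⟩ := ginv_greedy_s4 (A.take i)
  refine ⟨h1, ?_⟩
  intro h0 x hx
  rcases List.mem_flatten.mp (h2 x hx) with ⟨l, hl, hxl⟩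
  rcases List.mem_iff_getElem.mp hl with ⟨k, hk, rfl⟩
  exact h1 0 k h0 hk (Nat.zero_le _) x hxl
end

section
/- Let A be a permutation with buffer sequence w = M(A). If w_i > w_{i-1} (the buffer grows at stage i), then the new element A_i satisfies A_i = y + (w_i - w_{i-1}), where y is the maximum of A_1,...,A_{i-1}; moreover A_i is the new maximum of the prefix of length i. -/
/-- The set of values appearing in the first `i` entries of `A` (indices `1..i`). -/
def prefSet (A : ℕ → ℕ) (i : ℕ) : Finset ℕ := (Finset.Icc 1 i).image A

/-- `H_i`: the maximum value among the first `i` entries (0 for `i = 0`). -/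
def hi (A : ℕ → ℕ) (i : ℕ) : ℕ := (prefSet A i).sup id

/-- `ACK_i`: the least positive integer not among the first `i` entries. -/
noncomputable def ackSeq (A : ℕ → ℕ) (i : ℕ) : ℕ := sInf {k | 0 < k ∧ k ∉ prefSet A i}

/-- The buffer size `M_i = H_i - (ACK_i - 1)`. -/
noncomputable def buf (A : ℕ → ℕ) (i : ℕ) : ℤ := (hi A i : ℤ) - ackSeq A i + 1

/-- `A` restricted to `{1,...,n}` is a permutation of `{1,...,n}`. -/
def IsPermOn (A : ℕ → ℕ) (n : ℕ) : Prop := Set.BijOn A (Set.Icc 1 n) (Set.Icc 1 n)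

/-- The positions `1..n` can be partitioned into `k` classes, each of which
induces a strictly increasing subsequence of `A`. -/
def SUSle (A : ℕ → ℕ) (n k : ℕ) : Prop :=
  ∃ c : ℕ → ℕ, (∀ i ∈ Finset.Icc 1 n, c i < k) ∧
    ∀ i j, i ∈ Finset.Icc 1 n → j ∈ Finset.Icc 1 n → i < j → c i = c j → A i < A j

/-- `SUS(A)`: minimum number of increasing subsequences partitioning `A₁,…,Aₙ`. -/
noncomputable def sus (A : ℕ → ℕ) (n : ℕ) : ℕ := sInf {k | SUSle A n k}

/-- `LDS(A)`: maximum length of a strictly decreasing subsequence of `A₁,…,Aₙ`. -/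
noncomputable def lds (A : ℕ → ℕ) (n : ℕ) : ℕ :=
  sSup {m | ∃ s : Fin m → ℕ, StrictMono s ∧ (∀ t, s t ∈ Finset.Icc 1 n) ∧
    ∀ t u : Fin m, t < u → A (s u) < A (s t)}

lemma prefSet_succ (A : ℕ → ℕ) (i : ℕ) (h : 1 ≤ i) :
    prefSet A i = insert (A i) (prefSet A (i - 1)) := by
  obtain ⟨j, rfl⟩ : ∃ j, i = j + 1 := ⟨i - 1, (Nat.succ_pred_eq_of_pos h).symm⟩
  unfold prefSet
  rw [Nat.add_sub_cancel,
    show Finset.Icc 1 (j+1) = insert (j+1) (Finset.Icc 1 j) by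
      ext x; simp [Finset.mem_Icc, Finset.mem_insert]; omega,
    Finset.image_insert]

lemma le_hi_of_mem {A : ℕ → ℕ} {j x : ℕ} (hx : x ∈ prefSet A j) : x ≤ hi A j :=
  Finset.le_sup (f := id) hx

lemma ackS_nonempty (A : ℕ → ℕ) (j : ℕ) :
    {k | 0 < k ∧ k ∉ prefSet A j}.Nonempty :=
  ⟨hi A j + 1, by
    refine ⟨Nat.succ_pos _, fun hmem => ?_⟩
    have := le_hi_of_mem hmem; omega⟩

lemma ack_mem (A : ℕ → ℕ) (j : ℕ) :
    0 < ackSeq A j ∧ ackSeq A j ∉ prefSet A j :=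
  Nat.sInf_mem (ackS_nonempty A j)

lemma ack_le_hi_succ (A : ℕ → ℕ) (j : ℕ) : ackSeq A j ≤ hi A j + 1 :=
  Nat.sInf_le ⟨Nat.succ_pos _, fun hmem => by have := le_hi_of_mem hmem; omega⟩

/-- if the buffer grows at stage `i`, the new element is
`y + (w_i - w_{i-1})` where `y` is the previous running maximum, and it is the
new maximum of the prefix of length `i`. -/
theorem buffer_grows (n : ℕ) (A : ℕ → ℕ) (hA : IsPermOn A n)
    (i : ℕ) (hi1 : i ∈ Finset.Icc 1 n) (hgrow : buf A (i - 1) < buf A i) :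
    (A i : ℤ) = (hi A (i - 1) : ℤ) + (buf A i - buf A (i - 1)) ∧ A i = hi A i := by
  simp only [Finset.mem_Icc] at hi1
  have h1 : 1 ≤ i := hi1.1
  have hpref : prefSet A i = insert (A i) (prefSet A (i - 1)) := prefSet_succ A i h1
  have hhi : hi A i = max (A i) (hi A (i - 1)) := by
    unfold hi; rw [hpref, Finset.sup_insert]; rfl
  unfold buf at hgrow
  -- ack is monotone
  have hackmono : ackSeq A (i - 1) ≤ ackSeq A i := by
    refine Nat.sInf_le ⟨(ack_mem A i).1, fun hc => (ack_mem A i).2 ?_⟩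
    rw [hpref]; exact Finset.mem_insert_of_mem hc
  -- H grows
  have hHgrow : hi A (i - 1) < hi A i := by omega
  have hAi : A i = hi A i := by
    rcases max_cases (A i) (hi A (i - 1)) with ⟨he, _⟩ | ⟨he, _⟩ <;> omega
  -- ack is unchanged
  have hackeq : ackSeq A i = ackSeq A (i - 1) := by
    by_contra hne
    have hlt : ackSeq A (i - 1) < ackSeq A i := lt_of_le_of_ne hackmono (fun h => hne h.symm)
    have hmem : ackSeq A (i - 1) ∈ prefSet A i := by
      by_contra hc
      have : ackSeq A i ≤ ackSeq A (i - 1) :=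
        Nat.sInf_le ⟨(ack_mem A (i - 1)).1, hc⟩
      omega
    rw [hpref, Finset.mem_insert] at hmem
    rcases hmem with hmem | hmem
    · -- A i = ack_{i-1}
      have hle : ackSeq A (i - 1) ≤ hi A (i - 1) + 1 := ack_le_hi_succ A (i - 1)
      omega
    · exact (ack_mem A (i - 1)).2 hmem
  refine ⟨?_, hAi⟩
  unfold buf
  omega
end

section
/- Let A be a permutation with SUS(A) ≤ 3, and run the greedy increasing-list partition on A. If element A_i is placed into the third list L_3, then A_i = ACK_{i-1}, i.e., A_i is the least positive integer not among A_1,...,A_{i-1}; equivalently, the buffer shrinks at stage i (M_i < M_{i-1}). -/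
/- ## Auxiliary lemmas -/

lemma mem_of_getLastI {L : List ℕ} (h : L ≠ []) : L.getLastI ∈ L := by
  rw [List.getLastI_eq_getLast?, List.getLast?_eq_getLast h, Option.getD_some]
  exact List.getLast_mem h

lemma sorted_gt_le_of_getLast? {l : List ℕ} {z : ℕ} (hs : l.Pairwise (· > ·))
    (hz : l.getLast? = some z) : ∀ y ∈ l, z ≤ y := by
  induction l with
  | nil => simp at hz
  | cons a t ih =>
    cases t with
    | nil => simp at hz ⊢; omega
    | cons b t' =>
      intro y hy
      have hz' : (b :: t').getLast? = some z := by rwa [List.getLast?_cons_cons] at hz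
      rcases List.mem_cons.mp hy with rfl | hy
      · have h1 := ih hs.of_cons hz' b (by simp)
        have h2 : y > b := (List.pairwise_cons.mp hs).1 b (by simp)
        omega
      · exact ih hs.of_cons hz' y hy

lemma chain_extend {P c : List ℕ} {x : ℕ} (hc : c.Sublist P) (hcs : c.Pairwise (· > ·))
    (hcx : ∀ y ∈ c, x < y) :
    (c ++ [x]).Sublist (P ++ [x]) ∧ (c ++ [x]).Pairwise (· > ·) ∧ (c ++ [x]).getLast? = some x := by
  refine ⟨hc.append (List.Sublist.refl _), ?_, List.getLast?_concat⟩
  rw [List.pairwise_append]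
  exact ⟨hcs, List.pairwise_singleton _ _, fun a ha b hb => by
    simp only [List.mem_singleton] at hb; subst hb; exact hcx a ha⟩

/-- Invariant of the greedy algorithm: every list in the state is nonempty, its
elements come from `P`, and every element of the `j`-th list is the endpoint of a
strictly decreasing subsequence of `P` of length `d + j + 1`. -/
def InvD (P : List ℕ) (d : ℕ) (s : List (List ℕ)) : Prop :=
  ∀ j (h : j < s.length), s[j] ≠ [] ∧ ∀ y ∈ s[j],
    y ∈ P ∧ ∃ l : List ℕ, l.Sublist P ∧ l.Pairwise (· > ·) ∧ l.length = d + j + 1 ∧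
      l.getLast? = some y

lemma invD_step (x : ℕ) (P : List ℕ) (hx : x ∉ P) :
    ∀ (s : List (List ℕ)) (d : ℕ) (c : List ℕ),
      c.Sublist P → c.Pairwise (· > ·) → c.length = d → (∀ y ∈ c, x < y) →
      InvD P d s → InvD (P ++ [x]) d (greedyStep x s) := by
  intro s
  induction s with
  | nil =>
    intro d c hc hcs hcl hcx _
    intro j hj
    simp only [greedyStep, List.length_singleton] at hj
    have hj0 : j = 0 := by omega
    subst hj0
    simp only [greedyStep, List.getElem_cons_zero]
    refine ⟨by simp, fun y hy => ?_⟩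
    simp only [List.mem_singleton] at hy; subst hy
    obtain ⟨h1, h2, h3⟩ := chain_extend hc hcs hcx
    exact ⟨by simp, c ++ [y], h1, h2, by simp [hcl], h3⟩
  | cons L rest ih =>
    intro d c hc hcs hcl hcx hinv
    have h0 := hinv 0 (by simp)
    simp only [List.getElem_cons_zero] at h0
    by_cases hlt : L.getLastI < x
    · have hstep : greedyStep x (L :: rest) = (L ++ [x]) :: rest := by
        simp [greedyStep, hlt]
      rw [hstep]
      intro j hj
      match j with
      | 0 =>
        simp only [List.getElem_cons_zero]
        refine ⟨by simp, fun y hy => ?_⟩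
        rcases List.mem_append.mp hy with hy | hy
        · obtain ⟨hyP, l, hl, hls, hll, hlast⟩ := h0.2 y hy
          exact ⟨List.mem_append_left _ hyP, l,
            hl.trans (List.sublist_append_left P [x]), hls, hll, hlast⟩
        · simp only [List.mem_singleton] at hy; subst hy
          obtain ⟨h1, h2, h3⟩ := chain_extend hc hcs hcx
          exact ⟨by simp, c ++ [y], h1, h2, by simp [hcl], h3⟩
      | j + 1 =>
        simp only [List.getElem_cons_succ]
        have hj' : j + 1 < (L :: rest).length := by
          simpa using hj
        have hold := hinv (j+1) hj'
        simp only [List.getElem_cons_succ] at hold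
        refine ⟨hold.1, fun y hy => ?_⟩
        obtain ⟨hyP, l, hl, hls, hll, hlast⟩ := hold.2 y hy
        exact ⟨List.mem_append_left _ hyP, l,
          hl.trans (List.sublist_append_left P [x]), hls, hll, hlast⟩
    · have hstep : greedyStep x (L :: rest) = L :: greedyStep x rest := by
        simp [greedyStep, hlt]
      rw [hstep]
      have hLne := h0.1
      obtain ⟨hzP, c₀, hc₀, hc₀s, hc₀l, hc₀last⟩ := h0.2 _ (mem_of_getLastI hLne)
      have hxz : x < L.getLastI :=
        lt_of_le_of_ne (not_lt.mp hlt) (by rintro rfl; exact hx hzP)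
      have hc₀x : ∀ y ∈ c₀, x < y := fun y hy =>
        lt_of_lt_of_le hxz (sorted_gt_le_of_getLast? hc₀s hc₀last y hy)
      have hrest : InvD P (d+1) rest := by
        intro j hj
        have hold := hinv (j+1) (by simpa using Nat.succ_lt_succ hj)
        simp only [List.getElem_cons_succ] at hold
        refine ⟨hold.1, fun y hy => ?_⟩
        obtain ⟨hyP, l, hl, hls, hll, hlast⟩ := hold.2 y hy
        exact ⟨hyP, l, hl, hls, by omega, hlast⟩
      have hres := ih (d+1) c₀ hc₀ hc₀s (by omega) hc₀x hrest
      intro j hj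
      match j with
      | 0 =>
        simp only [List.getElem_cons_zero]
        refine ⟨hLne, fun y hy => ?_⟩
        obtain ⟨hyP, l, hl, hls, hll, hlast⟩ := h0.2 y hy
        exact ⟨List.mem_append_left _ hyP, l,
          hl.trans (List.sublist_append_left P [x]), hls, hll, hlast⟩
      | j + 1 =>
        simp only [List.getElem_cons_succ]
        have hj' : j < (greedyStep x rest).length := by simpa using hj
        have hnew := hres j hj'
        refine ⟨hnew.1, fun y hy => ?_⟩
        obtain ⟨hyP, l, hl, hls, hll, hlast⟩ := hnew.2 y hy
        exact ⟨hyP, l, hl, hls, by omega, hlast⟩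

lemma greedy_invD : ∀ (P : List ℕ), P.Nodup → InvD P 0 (greedy P) := by
  intro P
  induction P using List.reverseRecOn with
  | nil => intro _ j hj; simp [greedy] at hj
  | append_singleton P x ih =>
    intro hnd
    rw [List.nodup_append] at hnd
    have hg : greedy (P ++ [x]) = greedyStep x (greedy P) := by
      simp [greedy, List.foldl_append]
    rw [hg]
    exact invD_step x P (by have := hnd.2.2; simp [List.Disjoint] at this ⊢; tauto)
      (greedy P) 0 [] (by simp) (by simp) rfl (by simp) (ih hnd.1)

lemma maxL_append (P : List ℕ) (x : ℕ) : maxL (P ++ [x]) = max (maxL P) x := by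
  induction P with
  | nil => simp [maxL]
  | cons a t ih =>
    simp only [maxL, List.cons_append, List.foldr_cons] at ih ⊢
    rw [ih, ← Nat.max_assoc]

lemma le_maxL {P : List ℕ} {y : ℕ} (h : y ∈ P) : y ≤ maxL P := by
  induction P with
  | nil => simp at h
  | cons a t ih =>
    simp only [maxL, List.foldr_cons] at ih ⊢
    rcases List.mem_cons.mp h with rfl | h
    · exact le_max_left _ _
    · exact le_trans (ih h) (le_max_right _ _)

/-- for a permutation with `SUS(A) ≤ 3`, if `A_i` is placed by the
greedy algorithm into the third list `L_3`, then `A_i = ACK_{i-1}` (the least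
positive integer missing from `A_1,…,A_{i-1}`) and the buffer shrinks at stage `i`. -/
theorem third_list_forces_ack (n : ℕ) (A : List ℕ) (hA : A.Perm (List.range' 1 n))
    (hsus : susL A ≤ 3) (i : ℕ) (h1 : 1 ≤ i) (hn : i ≤ A.length)
    (h3 : 2 < (greedy (A.take i)).length)
    (hplace : ((greedy (A.take i))[2]'h3).getLastI = A.getD (i - 1) 0) :
    A.getD (i - 1) 0 = ackL (A.take (i - 1)) ∧
      bufL (A.take i) < bufL (A.take (i - 1)) := by
  have hlen : i - 1 < A.length := by omega
  set x := A.getD (i - 1) 0 with hxdef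
  have hxel : x = A[i-1] := List.getD_eq_getElem A 0 hlen
  have htake : A.take i = A.take (i-1) ++ [x] := by
    conv_lhs => rw [show i = (i-1)+1 by omega]
    rw [List.take_succ, List.getElem?_eq_getElem hlen]
    simp [hxel]
  have hnodupA : A.Nodup := hA.nodup_iff.mpr (List.nodup_range' (s := 1) (n := n))
  have hmemA : ∀ y, y ∈ A ↔ 1 ≤ y ∧ y < 1 + n := fun y => hA.mem_iff.trans List.mem_range'_1
  have hndtake : (A.take i).Nodup := (List.take_sublist i A).nodup hnodupA
  have hxA : x ∈ A := by rw [hxel]; exact List.getElem_mem hlen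
  have hxpos : 1 ≤ x := ((hmemA x).mp hxA).1
  have hxlt : x < 1 + n := ((hmemA x).mp hxA).2
  have hxnotin : x ∉ A.take (i-1) := by
    have hnd := htake ▸ hndtake
    rw [List.nodup_append] at hnd
    intro hmem
    exact hnd.2.2 x hmem x (List.mem_singleton_self x) rfl
  -- extract the decreasing chain of length 3 ending at x
  obtain ⟨hne2, hchain⟩ := greedy_invD (A.take i) hndtake 2 h3
  obtain ⟨-, l, hl, hls, hll, hlast⟩ := hchain _ (mem_of_getLastI hne2)
  rw [hplace] at hlast
  rcases l with _ | ⟨a, _ | ⟨b, _ | ⟨z, _ | ⟨w, l⟩⟩⟩⟩ <;> simp at hll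
  have hz : z = x := by simpa using hlast
  subst hz
  have hab : a > b := (List.pairwise_cons.mp hls).1 b (by simp)
  have hax : a > x := (List.pairwise_cons.mp hls).1 x (by simp)
  have hbx : b > x := (List.pairwise_cons.mp (List.pairwise_cons.mp hls).2).1 x (by simp)
  -- key claim: every positive integer missing from the first i-1 packets is ≥ x
  have key : ∀ k, 0 < k → k ∉ A.take (i-1) → x ≤ k := by
    by_contra hcon
    push_neg at hcon
    obtain ⟨k, hk0, hknotin, hkx⟩ := hcon
    have hkA : k ∈ A := (hmemA k).mpr ⟨hk0, by omega⟩
    have hknotin' : k ∉ A.take i := by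
      rw [htake]
      intro hc
      rcases List.mem_append.mp hc with h | h
      · exact hknotin h
      · simp at h; omega
    have hkdrop : k ∈ A.drop i := by
      have hsplit : k ∈ A.take i ++ A.drop i := by
        rw [List.take_append_drop]; exact hkA
      rcases List.mem_append.mp hsplit with h | h
      · exact absurd h hknotin'
      · exact h
    have chain4 : ([a, b, x, k]).Sublist A := by
      have h4 : ([a,b,x] ++ [k]).Sublist (A.take i ++ A.drop i) :=
        hl.append (List.singleton_sublist.mpr hkdrop)
      simpa [List.take_append_drop] using h4
    have hS3 : SUSleL A 3 := by
      have hneS : {m | SUSleL A m}.Nonempty :=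
        ⟨A.length, id, fun p hp => hp, fun p q hpq _ hc => absurd hc (Nat.ne_of_lt hpq)⟩
      obtain ⟨cc, hc1, hc2⟩ := Nat.sInf_mem hneS
      exact ⟨cc, fun p hp => lt_of_lt_of_le (hc1 p hp) hsus, hc2⟩
    obtain ⟨cc, hc1, hc2⟩ := hS3
    obtain ⟨is, his, hpw⟩ := List.sublist_eq_map_getElem chain4
    rcases is with _|⟨i0,_|⟨i1,_|⟨i2,_|⟨i3,_|⟨i4,is⟩⟩⟩⟩⟩ <;> simp [List.get_eq_getElem] at his
    obtain ⟨ha', hb', hx', hk'⟩ := his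
    simp only [List.pairwise_cons, List.mem_cons, List.mem_singleton, List.not_mem_nil] at hpw
    have v : ∀ (p q : Fin A.length), (p:ℕ) < (q:ℕ) → A[(q:ℕ)] < A[(p:ℕ)] → cc p ≠ cc q := by
      intro p q hpq hv hc
      have hmono := hc2 p q hpq q.isLt hc
      rw [List.getD_eq_getElem _ _ p.isLt, List.getD_eq_getElem _ _ q.isLt] at hmono
      omega
    have l01 : (i0:ℕ) < (i1:ℕ) := hpw.1 i1 (Or.inl rfl)
    have l02 : (i0:ℕ) < (i2:ℕ) := hpw.1 i2 (Or.inr (Or.inl rfl))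
    have l03 : (i0:ℕ) < (i3:ℕ) := hpw.1 i3 (Or.inr (Or.inr (Or.inl rfl)))
    have l12 : (i1:ℕ) < (i2:ℕ) := hpw.2.1 i2 (Or.inl rfl)
    have l13 : (i1:ℕ) < (i3:ℕ) := hpw.2.1 i3 (Or.inr (Or.inl rfl))
    have l23 : (i2:ℕ) < (i3:ℕ) := hpw.2.2.1 i3 (Or.inl rfl)
    have d01 := v i0 i1 l01 (by rw [← ha', ← hb']; omega)
    have d02 := v i0 i2 l02 (by rw [← ha', ← hx']; omega)
    have d03 := v i0 i3 l03 (by rw [← ha', ← hk']; omega)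
    have d12 := v i1 i2 l12 (by rw [← hb', ← hx']; omega)
    have d13 := v i1 i3 l13 (by rw [← hb', ← hk']; omega)
    have d23 := v i2 i3 l23 (by rw [← hx', ← hk']; omega)
    have c0 := hc1 i0 i0.isLt
    have c1 := hc1 i1 i1.isLt
    have c2 := hc1 i2 i2.isLt
    have c3 := hc1 i3 i3.isLt
    omega
  -- part 1 : x = ackL (take (i-1))
  have hack1 : ackL (A.take (i-1)) = x := by
    have hxS : x ∈ {k | 0 < k ∧ k ∉ A.take (i-1)} := ⟨hxpos, hxnotin⟩
    have hub : ackL (A.take (i-1)) ≤ x := Nat.sInf_le hxS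
    have hmemS := Nat.sInf_mem ⟨x, hxS⟩
    have hlb : x ≤ ackL (A.take (i-1)) := key _ hmemS.1 hmemS.2
    omega
  -- part 2 : buffer shrinks
  have haQ : a ∈ A.take (i-1) := by
    have haT : a ∈ A.take i := hl.subset (by simp)
    rw [htake] at haT
    rcases List.mem_append.mp haT with h | h
    · exact h
    · simp at h; omega
  have hmax : maxL (A.take i) = maxL (A.take (i-1)) := by
    rw [htake, maxL_append]
    exact max_eq_left (le_trans (by omega) (le_maxL haQ))
  have hackS : x < ackL (A.take i) := by
    have hneS : {k | 0 < k ∧ k ∉ A.take i}.Nonempty := by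
      refine ⟨n+1, by omega, fun hmem => ?_⟩
      have := (hmemA (n+1)).mp (List.take_subset i A hmem)
      omega
    have hm := Nat.sInf_mem hneS
    have hsub : A.take (i-1) ⊆ A.take i := by
      rw [htake]; exact List.subset_append_left _ _
    have hge := key _ hm.1 (fun hc => hm.2 (hsub hc))
    have hne : sInf {k | 0 < k ∧ k ∉ A.take i} ≠ x := by
      intro hc
      exact hm.2 (by rw [hc, htake]; simp)
    show x < sInf {k | 0 < k ∧ k ∉ A.take i}
    omega
  refine ⟨hack1.symm, ?_⟩
  unfold bufL
  rw [hmax, hack1]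
  have hgoal := hackS
  omega
end

section
/- Let A be a permutation with SUS(A) ≤ 3, run under the greedy increasing-list partition. If element A_i is placed into list L_3 and A_i > ACK_{i-1}, then the element equal to ACK_{i-1}, which arrives at some later stage, cannot be placed in L_1, L_2 or L_3, forcing SUS(A) ≥ 4 — a contradiction. Hence any element placed in L_3 equals the current smallest missing ID. -/
namespace ThirdAux

lemma sorted_ge_last : ∀ (l : List ℕ), l.Pairwise (· ≥ ·) → ∀ e, l.getLast? = some e →
    ∀ b ∈ l, e ≤ b := by
  intro l
  induction l with
  | nil => intro _ e he; simp at he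
  | cons c t ih =>
    intro h e he b hb
    rw [List.pairwise_cons] at h
    cases t with
    | nil =>
      simp at he hb; omega
    | cons d u =>
      rw [List.getLast?_cons_cons] at he
      rcases List.mem_cons.1 hb with rfl | hb'
      · exact h.1 e (List.mem_of_getLast? he)
      · exact ih h.2 e he b hb'

lemma greedyStep_eq (x : ℕ) (s : List (List ℕ)) :
    ∃ k, k ≤ s.length ∧
      (∀ j, j < k → ∀ L, s[j]? = some L → x ≤ L.getLastI) ∧
      greedyStep x s = s.take k ++ (s.getD k [] ++ [x]) :: s.drop (k + 1) := by
  induction s with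
  | nil => exact ⟨0, by simp, by simp, by simp [greedyStep]⟩
  | cons L rest ih =>
    by_cases h : L.getLastI < x
    · exact ⟨0, by simp, by simp, by simp [greedyStep, h]⟩
    · obtain ⟨k, hk, hall, heq⟩ := ih
      refine ⟨k + 1, by simpa using hk, ?_, ?_⟩
      · intro j hj M hM
        cases j with
        | zero => simp at hM; subst hM; omega
        | succ j => exact hall j (by omega) M (by simpa using hM)
      · simp only [greedyStep, if_neg h, heq, List.take_succ_cons, List.getD_cons_succ,
          List.drop_succ_cons, List.cons_append]

/-- Invariant: the last entry of the `k`-th greedy list ends a nonincreasing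
subsequence of length `k+1`. -/
def Inv (P : List ℕ) (s : List (List ℕ)) : Prop :=
  ∀ k L, s[k]? = some L →
    ∃ l : List ℕ, l.Sublist P ∧ l.Pairwise (· ≥ ·) ∧ l.length = k + 1 ∧
      l.getLast? = some L.getLastI

lemma inv_step {P s} (x : ℕ) (h : Inv P s) : Inv (P ++ [x]) (greedyStep x s) := by
  obtain ⟨k, hk, hall, heq⟩ := greedyStep_eq x s
  intro m L hm
  rw [heq, List.getElem?_append, List.length_take] at hm
  have hmin : min k s.length = k := by omega
  rw [hmin] at hm
  by_cases hmk : m < k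
  · rw [if_pos hmk, List.getElem?_take, if_pos hmk] at hm
    obtain ⟨l, h1, h2, h3, h4⟩ := h m L hm
    exact ⟨l, h1.trans (List.sublist_append_left P [x]), h2, h3, h4⟩
  · rw [if_neg hmk] at hm
    by_cases hmk2 : m = k
    · subst hmk2
      have hm0 : m - m = 0 := by omega
      rw [hm0, List.getElem?_cons_zero] at hm
      have hL : L = s.getD m [] ++ [x] := by simpa using hm.symm
      subst hL
      have hlast : (s.getD m [] ++ [x]).getLastI = x := by
        rw [List.getLastI_eq_getLast?, List.getLast?_concat, Option.getD_some]
      rw [hlast]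
      cases m with
      | zero =>
        exact ⟨[x], List.sublist_append_right P [x], by simp, by simp, by simp⟩
      | succ j =>
        have hj : j < s.length := by omega
        obtain ⟨l, h1, h2, h3, h4⟩ := h j s[j] (List.getElem?_eq_getElem hj)
        have hxle : x ≤ s[j].getLastI := hall j (by omega) s[j] (List.getElem?_eq_getElem hj)
        refine ⟨l ++ [x], h1.append (List.Sublist.refl [x]), ?_, by simp [h3], by
          rw [List.getLast?_concat]⟩
        refine List.pairwise_append.2 ⟨h2, by simp, ?_⟩
        intro b hb y hy
        simp only [List.mem_singleton] at hy
        subst hy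
        exact le_trans hxle (sorted_ge_last l h2 _ h4 b hb)
    · have hstep : m - k = (m - k - 1) + 1 := by omega
      rw [hstep, List.getElem?_cons_succ, List.getElem?_drop] at hm
      have harith : k + 1 + (m - k - 1) = m := by omega
      rw [harith] at hm
      obtain ⟨l, h1, h2, h3, h4⟩ := h m L hm
      exact ⟨l, h1.trans (List.sublist_append_left P [x]), h2, h3, h4⟩

lemma inv_greedy (P : List ℕ) : Inv P (greedy P) := by
  induction P using List.reverseRecOn with
  | nil => intro k L hm; simp [greedy] at hm
  | append_singleton Q x ih =>
    have hg : greedy (Q ++ [x]) = greedyStep x (greedy Q) := by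
      simp [greedy, List.foldl_append]
    rw [hg]; exact inv_step x ih

lemma susle_of_susL_le {A : List ℕ} {k : ℕ} (h : susL A ≤ k) : SUSleL A k := by
  have hne : SUSleL A A.length :=
    ⟨id, fun i hi => hi, fun i j hij _ hc => absurd (hc : i = j) (Nat.ne_of_lt hij)⟩
  have hmem : susL A ∈ {k | SUSleL A k} :=
    Nat.sInf_mem (⟨A.length, hne⟩ : Set.Nonempty {k | SUSleL A k})
  obtain ⟨c, hc1, hc2⟩ := hmem
  exact ⟨c, fun i hi => lt_of_lt_of_le (hc1 i hi) h, hc2⟩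

lemma no_dec4 {A : List ℕ} (hs : SUSleL A 3) {l : List ℕ} (hl : l.Sublist A)
    (hsort : l.Pairwise (· > ·)) (hlen : l.length = 4) : False := by
  obtain ⟨c, hc1, hc2⟩ := hs
  obtain ⟨is, hmap, hpw⟩ := List.sublist_eq_map_getElem hl
  have hlen' : is.length = 4 := by rw [hmap] at hlen; simpa using hlen
  have hsort' : is.Pairwise (fun f g : Fin A.length => A.get f > A.get g) := by
    rw [hmap] at hsort
    exact (List.pairwise_map).1 hsort
  have hcomb := hpw.and hsort'
  have hnd : (is.map fun f : Fin A.length => c f.val).Nodup := by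
    refine List.pairwise_map.2 (hcomb.imp ?_)
    rintro f g ⟨hfg, hgt⟩ hceq
    have hflt : f.val < g.val := hfg
    have := hc2 f.val g.val hflt g.isLt hceq
    rw [List.getD_eq_getElem A 0 f.isLt, List.getD_eq_getElem A 0 g.isLt] at this
    simp only [List.get_eq_getElem] at hgt
    omega
  have hcard : (is.map fun f : Fin A.length => c f.val).toFinset.card = 4 := by
    rw [List.toFinset_card_of_nodup hnd]; simp [hlen']
  have hsub : (is.map fun f : Fin A.length => c f.val).toFinset ⊆ Finset.range 3 := by
    intro y hy
    rw [List.mem_toFinset, List.mem_map] at hy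
    obtain ⟨f, _, rfl⟩ := hy
    exact Finset.mem_range.2 (hc1 f.val f.isLt)
  have hle := Finset.card_le_card hsub
  rw [hcard, Finset.card_range] at hle
  omega

end ThirdAux

/-- for a permutation with `SUS(A) ≤ 3`, an element placed into the
third list cannot exceed the current smallest missing ID (otherwise that missing
ID, arriving later, would force a fourth list and `SUS(A) ≥ 4`); hence any element
placed in `L_3` equals the current smallest missing ID. -/
theorem third_list_elem_eq_smallest_missing (n : ℕ) (A : List ℕ)
    (hA : A.Perm (List.range' 1 n)) (hsus : susL A ≤ 3)
    (i : ℕ) (h1 : 1 ≤ i) (hn : i ≤ A.length)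
    (h3 : 2 < (greedy (A.take i)).length)
    (hplace : ((greedy (A.take i))[2]'h3).getLastI = A.getD (i - 1) 0) :
    ¬ ackL (A.take (i - 1)) < A.getD (i - 1) 0 ∧
      A.getD (i - 1) 0 = ackL (A.take (i - 1)) := by
  have hi : i - 1 < A.length := by omega
  have hxe : A.getD (i - 1) 0 = A[i - 1] := List.getD_eq_getElem A 0 hi
  set x := A[i - 1]'hi with hxdef
  rw [hxe] at hplace ⊢
  have hndA : A.Nodup := hA.nodup_iff.2 (List.nodup_range' (s := 1) (n := n))
  have hmemA : ∀ m, m ∈ A ↔ 1 ≤ m ∧ m < 1 + n := fun m =>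
    (hA.mem_iff).trans List.mem_range'_1
  have hxA : x ∈ A := List.getElem_mem hi
  -- decompose take i
  have htake : A.take i = A.take (i - 1) ++ [x] := by
    have hcg := List.take_concat_get hi
    rw [List.concat_eq_append] at hcg
    have hii : i - 1 + 1 = i := by omega
    rw [hii] at hcg
    exact hcg.symm
  -- x not in the earlier prefix
  have hxnot : x ∉ A.take (i - 1) := by
    have hndt : (A.take i).Nodup := hndA.sublist (List.take_sublist i A)
    rw [htake, List.nodup_append] at hndt
    intro hmem
    exact hndt.2.2 x hmem x (List.mem_singleton_self x) rfl
  -- the length-3 nonincreasing subsequence ending at x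
  obtain ⟨l, hl1, hl2, hl3, hl4⟩ :=
    ThirdAux.inv_greedy (A.take i) 2 _ (List.getElem?_eq_getElem h3)
  rw [hplace] at hl4
  -- properties of the ack value
  have hSne : Set.Nonempty {k | 0 < k ∧ k ∉ A.take (i - 1)} := by
    refine ⟨n + 1, Nat.succ_pos n, fun hmem => ?_⟩
    have : n + 1 ∈ A := (List.take_sublist (i - 1) A).subset hmem
    have := (hmemA (n + 1)).1 this
    omega
  have haS : 0 < ackL (A.take (i - 1)) ∧ ackL (A.take (i - 1)) ∉ A.take (i - 1) :=
    Nat.sInf_mem hSne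
  -- ¬ x < ack
  have hxa : ¬ x < ackL (A.take (i - 1)) := by
    intro hlt
    have hnm := Nat.notMem_of_lt_sInf (s := {k | 0 < k ∧ k ∉ A.take (i - 1)}) hlt
    have hx1 : 1 ≤ x := ((hmemA x).1 hxA).1
    simp only [Set.mem_setOf_eq, not_and, not_not] at hnm
    exact hxnot (hnm (by omega))
  -- ¬ ack < x
  have hax : ¬ ackL (A.take (i - 1)) < x := by
    intro hlt
    set a := ackL (A.take (i - 1)) with hadef
    have hxn : x < 1 + n := ((hmemA x).1 hxA).2
    have haA : a ∈ A := (hmemA a).2 ⟨haS.1, by omega⟩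
    have hadrop : a ∈ A.drop (i - 1) := by
      conv at haA => rw [← List.take_append_drop (i - 1) A]
      rcases List.mem_append.1 haA with h | h
      · exact absurd h haS.2
      · exact h
    have hadrop' : a ∈ A.drop i := by
      rw [List.drop_eq_getElem_cons hi] at hadrop
      rcases List.mem_cons.1 hadrop with heq | h
      · omega
      · have : i - 1 + 1 = i := by omega
        rwa [this] at h
    have hsub4 : (l ++ [a]).Sublist A := by
      conv_rhs => rw [← List.take_append_drop i A]
      exact hl1.append (List.singleton_sublist.2 hadrop')
    have hsort4 : (l ++ [a]).Pairwise (· ≥ ·) := by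
      refine List.pairwise_append.2 ⟨hl2, by simp, ?_⟩
      intro b hb y hy
      simp only [List.mem_singleton] at hy
      subst hy
      have := ThirdAux.sorted_ge_last l hl2 x hl4 b hb
      omega
    have hnd4 : (l ++ [a]).Nodup := hndA.sublist hsub4
    have hsort4' : (l ++ [a]).Pairwise (· > ·) :=
      (hsort4.and hnd4).imp fun h => lt_of_le_of_ne h.1 (Ne.symm h.2)
    exact ThirdAux.no_dec4 (ThirdAux.susle_of_susL_le hsus) hsub4 hsort4' (by simp [hl3])
  exact ⟨hax, by omega⟩
end

section
/- The permutations A = (4,3,2,1) and B = (4,2,3,1) of {1,2,3,4} are distinct, satisfy SUS(A) = 4 and SUS(B) = 3, and have equal buffer sequences M(A) = M(B) = (4,4,4,0). Hence the uniqueness theorem for buffer sequences fails when the bound SUS ≤ 3 is relaxed to SUS ≤ 4. -/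
lemma ack_eq (P : List ℕ) (n : ℕ) (h1 : 0 < n) (h2 : n ∉ P)
    (h3 : ∀ m, 0 < m → m ∉ P → n ≤ m) : ackL P = n :=
  le_antisymm (Nat.sInf_le ⟨h1, h2⟩) (le_csInf ⟨n, h1, h2⟩ fun b hb => h3 b hb.1 hb.2)

lemma sus_mono {A : List ℕ} {k m : ℕ} (h : SUSleL A k) (hkm : k ≤ m) : SUSleL A m := by
  obtain ⟨c, h1, h2⟩ := h
  exact ⟨c, fun i hi => lt_of_lt_of_le (h1 i hi) hkm, h2⟩

lemma susA : susL [4, 3, 2, 1] = 4 := by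
  have mem4 : SUSleL [4, 3, 2, 1] 4 :=
    ⟨id, by intro i hi; simpa using hi, fun i j hij hj heq => absurd heq (Nat.ne_of_lt hij)⟩
  have not3 : ¬ SUSleL [4, 3, 2, 1] 3 := by
    rintro ⟨c, h1, h2⟩
    have c0 := h1 0 (by norm_num); have c1 := h1 1 (by norm_num)
    have c2 := h1 2 (by norm_num); have c3 := h1 3 (by norm_num)
    have e01 : c 0 ≠ c 1 := fun h => absurd (h2 0 1 (by norm_num) (by norm_num) h) (by decide)
    have e02 : c 0 ≠ c 2 := fun h => absurd (h2 0 2 (by norm_num) (by norm_num) h) (by decide)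
    have e03 : c 0 ≠ c 3 := fun h => absurd (h2 0 3 (by norm_num) (by norm_num) h) (by decide)
    have e12 : c 1 ≠ c 2 := fun h => absurd (h2 1 2 (by norm_num) (by norm_num) h) (by decide)
    have e13 : c 1 ≠ c 3 := fun h => absurd (h2 1 3 (by norm_num) (by norm_num) h) (by decide)
    have e23 : c 2 ≠ c 3 := fun h => absurd (h2 2 3 (by norm_num) (by norm_num) h) (by decide)
    omega
  refine le_antisymm (Nat.sInf_le mem4) (le_csInf ⟨4, mem4⟩ fun b hb => ?_)
  by_contra h
  exact not3 (sus_mono hb (by omega))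

lemma susB : susL [4, 2, 3, 1] = 3 := by
  have mem3 : SUSleL [4, 2, 3, 1] 3 := by
    refine ⟨fun i => [0, 1, 1, 2].getD i 0, ?_, ?_⟩
    · intro i hi; simp at hi; interval_cases i <;> norm_num
    · intro i j hij hj heq
      simp at hj
      interval_cases j <;> interval_cases i <;> simp_all
  have not2 : ¬ SUSleL [4, 2, 3, 1] 2 := by
    rintro ⟨c, h1, h2⟩
    have c0 := h1 0 (by norm_num); have c2 := h1 2 (by norm_num)
    have c3 := h1 3 (by norm_num)
    have e02 : c 0 ≠ c 2 := fun h => absurd (h2 0 2 (by norm_num) (by norm_num) h) (by decide)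
    have e03 : c 0 ≠ c 3 := fun h => absurd (h2 0 3 (by norm_num) (by norm_num) h) (by decide)
    have e23 : c 2 ≠ c 3 := fun h => absurd (h2 2 3 (by norm_num) (by norm_num) h) (by decide)
    omega
  refine le_antisymm (Nat.sInf_le mem3) (le_csInf ⟨3, mem3⟩ fun b hb => ?_)
  by_contra h
  exact not2 (sus_mono hb (by omega))

lemma ack1 (P : List ℕ) (h : (1 : ℕ) ∉ P) : ackL P = 1 :=
  ack_eq _ _ one_pos h (fun m hm _ => hm)

lemma ackA4 : ackL [4, 3, 2, 1] = 5 :=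
  ack_eq _ _ (by norm_num) (by decide) (by intro m hm hn; simp at hn; omega)

lemma ackB4 : ackL [4, 2, 3, 1] = 5 :=
  ack_eq _ _ (by norm_num) (by decide) (by intro m hm hn; simp at hn; omega)

/-- `A = (4,3,2,1)` and `B = (4,2,3,1)` are distinct, have
`SUS(A) = 4`, `SUS(B) = 3`, and equal buffer sequences `(4,4,4,0)`; so uniqueness
fails for `SUS ≤ 4`. -/
theorem counterexample_sus4 :
    ([4, 3, 2, 1] : List ℕ) ≠ [4, 2, 3, 1] ∧
    susL [4, 3, 2, 1] = 4 ∧ susL [4, 2, 3, 1] = 3 ∧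
    (List.range 4).map (fun i => bufL (([4, 3, 2, 1] : List ℕ).take (i + 1))) =
      [4, 4, 4, 0] ∧
    (List.range 4).map (fun i => bufL (([4, 2, 3, 1] : List ℕ).take (i + 1))) =
      [4, 4, 4, 0] := by
  have a1 : ackL [4] = 1 := ack1 _ (by decide)
  have a2 : ackL [4, 3] = 1 := ack1 _ (by decide)
  have a3 : ackL [4, 3, 2] = 1 := ack1 _ (by decide)
  have b2 : ackL [4, 2] = 1 := ack1 _ (by decide)
  have b3 : ackL [4, 2, 3] = 1 := ack1 _ (by decide)
  refine ⟨by decide, susA, susB, ?_, ?_⟩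
  · show [bufL [4], bufL [4, 3], bufL [4, 3, 2], bufL [4, 3, 2, 1]] = [4, 4, 4, 0]
    simp [bufL, a1, a2, a3, ackA4, maxL]
  · show [bufL [4], bufL [4, 2], bufL [4, 2, 3], bufL [4, 2, 3, 1]] = [4, 4, 4, 0]
    simp [bufL, a1, b2, b3, ackB4, maxL]
end

section
/- For the permutations A = (4,3,2,1) and B = (4,2,3,1), the multisets of displacements {A_i - i : i} and {B_i - i : i} are {-3,-1,1,3} and {-3,0,0,3} respectively; for every choice of truncation threshold DT ∈ {1,2,...} ∪ {∞}, the displacement distributions restricted to [-DT, DT] differ. Since M(A) = M(B), the reorder-density measure RD is not consistent with respect to the equivalence ≡_FB, for any value of DT. -/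
/-- The multiset of displacements `P_i - i` (positions counted from 1). -/
def disp (P : List ℕ) : Multiset ℤ :=
  ↑((P.zipIdx.map Prod.swap).map (fun p => (p.2 : ℤ) - ((p.1 : ℤ) + 1)))

/-- Reorder density with threshold `DT ∈ {1,2,…} ∪ {∞}`: the displacement
multiset restricted to values in `[-DT, DT]`. -/
def rd (P : List ℕ) (DT : ℕ∞) : Multiset ℤ :=
  (disp P).filter (fun v => (v.natAbs : ℕ∞) ≤ DT)

lemma ackL_eq (P : List ℕ) (k : ℕ) (hk : 0 < k) (hmem : k ∉ P)
    (hbelow : ∀ m, 0 < m → m < k → m ∈ P) : ackL P = k := by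
  apply le_antisymm
  · exact Nat.sInf_le ⟨hk, hmem⟩
  · by_contra h
    push_neg at h
    have hm := Nat.sInf_mem (⟨k, hk, hmem⟩ : Set.Nonempty {k | 0 < k ∧ k ∉ P})
    exact hm.2 (hbelow _ hm.1 h)

/-- the permutations `(4,3,2,1)` and `(4,2,3,1)` have displacement
multisets `{-3,-1,1,3}` and `{-3,0,0,3}`, equal buffer sequences, and for every
threshold `DT` the truncated displacement distributions differ: the reorder
density RD is not consistent with respect to `≡_FB`, for any value of `DT`. -/
theorem rd_inconsistent :
    disp [4, 3, 2, 1] = ({-3, -1, 1, 3} : Multiset ℤ) ∧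
    disp [4, 2, 3, 1] = ({-3, 0, 0, 3} : Multiset ℤ) ∧
    (∀ i, bufL (([4, 3, 2, 1] : List ℕ).take i) = bufL (([4, 2, 3, 1] : List ℕ).take i)) ∧
    ∀ DT : ℕ∞, 1 ≤ DT → rd [4, 3, 2, 1] DT ≠ rd [4, 2, 3, 1] DT := by
  have a1 : ackL [4] = 1 := ackL_eq _ 1 one_pos (by simp) (by omega)
  have a2 : ackL [4, 3] = 1 := ackL_eq _ 1 one_pos (by simp) (by omega)
  have a3 : ackL [4, 3, 2] = 1 := ackL_eq _ 1 one_pos (by simp) (by omega)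
  have a4 : ackL [4, 3, 2, 1] = 5 := ackL_eq _ 5 (by norm_num) (by simp)
    (by intro m h1 h2; interval_cases m <;> simp)
  have b2 : ackL [4, 2] = 1 := ackL_eq _ 1 one_pos (by simp) (by omega)
  have b3 : ackL [4, 2, 3] = 1 := ackL_eq _ 1 one_pos (by simp) (by omega)
  have b4 : ackL [4, 2, 3, 1] = 5 := ackL_eq _ 5 (by norm_num) (by simp)
    (by intro m h1 h2; interval_cases m <;> simp)
  refine ⟨Multiset.coe_eq_coe.mpr (by decide), Multiset.coe_eq_coe.mpr (by decide), ?_, ?_⟩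
  · intro i
    match i with
    | 0 => rfl
    | 1 => rfl
    | 2 => simp [bufL, a2, b2, maxL]
    | 3 => simp [bufL, a3, b3, maxL]
    | (n+4) =>
      rw [List.take_of_length_le (by simp), List.take_of_length_le (by simp)]
      simp [bufL, a4, b4, maxL]
  · intro DT _ h
    have h0 : (0 : ℤ) ∈ rd [4, 2, 3, 1] DT := by
      rw [rd, Multiset.mem_filter]
      exact ⟨by simp [disp], by simp⟩
    rw [← h, rd, Multiset.mem_filter] at h0
    exact absurd h0.1 (by simp [disp])
end
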